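/- arXiv:0704.2744 — 5 statements merged into one kernel-verified Lean document; each statement's English description precedes it below -/
import Mathlib

section
/- Let M be a left C[x]⟨∂_x⟩-module and 𝓜 = M ⊗_C C[ξ] as above. The C-linear map M → coker(∂_x − ξ : 𝓜 → 𝓜), m ↦ [m ⊗ 1], is a bijection. -/
open TensorProduct

/-- Let `M` be a left ℂ[x]⟨∂ₓ⟩-module, given by the actions `Xop` of `x` and
`Dop` of `∂ₓ` with `[Dop, Xop] = 1`, and let `𝓜 = M ⊗_ℂ ℂ[ξ]`.  The ℂ-linear
map `M → coker(∂ₓ - ξ : 𝓜 → 𝓜)`, `m ↦ [m ⊗ 1]`, is a bijection. -/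
theorem stmt_4 {M : Type*} [AddCommGroup M] [Module ℂ M]
    (Xop Dop : M →ₗ[ℂ] M) (hrel : Dop ∘ₗ Xop - Xop ∘ₗ Dop = LinearMap.id) :
    Function.Bijective
      ((LinearMap.range
          (TensorProduct.map Dop (LinearMap.id : Polynomial ℂ →ₗ[ℂ] Polynomial ℂ)
            - TensorProduct.map (LinearMap.id : M →ₗ[ℂ] M)
                (LinearMap.mulLeft ℂ (Polynomial.X : Polynomial ℂ)))).mkQ
        ∘ₗ ((TensorProduct.mk ℂ M (Polynomial ℂ)).flip 1)) := by
  classical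
  set T : M ⊗[ℂ] Polynomial ℂ →ₗ[ℂ] M ⊗[ℂ] Polynomial ℂ :=
    TensorProduct.map Dop (LinearMap.id : Polynomial ℂ →ₗ[ℂ] Polynomial ℂ)
      - TensorProduct.map (LinearMap.id : M →ₗ[ℂ] M)
          (LinearMap.mulLeft ℂ (Polynomial.X : Polynomial ℂ)) with hT
  set Φ : M ⊗[ℂ] Polynomial ℂ →ₗ[ℂ] M :=
    TensorProduct.lift
      (((Polynomial.aeval Dop).toLinearMap :
          Polynomial ℂ →ₗ[ℂ] Module.End ℂ M).flip) with hΦ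
  have hΦtmul : ∀ (m : M) (p : Polynomial ℂ),
      Φ (m ⊗ₜ p) = Polynomial.aeval Dop p m := fun m p => rfl
  have haevalX : ∀ (q : Polynomial ℂ) (m : M),
      Polynomial.aeval Dop q (Dop m)
        = Polynomial.aeval Dop (Polynomial.X * q) m := by
    intro q m
    rw [mul_comm, map_mul, Polynomial.aeval_X, Module.End.mul_apply]
  have hΦT : ∀ (m : M) (p : Polynomial ℂ), Φ (T (m ⊗ₜ p)) = 0 := by
    intro m p
    have hTm : T (m ⊗ₜ p) = Dop m ⊗ₜ p - m ⊗ₜ (Polynomial.X * p) := by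
      simp [hT, TensorProduct.map_tmul]
    rw [hTm, map_sub, hΦtmul, hΦtmul, sub_eq_zero]
    exact haevalX p m
  have hle : LinearMap.range T ≤ LinearMap.ker Φ := by
    rintro x ⟨y, rfl⟩
    rw [LinearMap.mem_ker]
    induction y using TensorProduct.induction_on with
    | zero => simp
    | tmul m p => exact hΦT m p
    | add a b ha hb => rw [map_add, map_add, ha, hb, add_zero]
  set g : (M ⊗[ℂ] Polynomial ℂ) ⧸ LinearMap.range T →ₗ[ℂ] M :=
    Submodule.liftQ _ Φ hle with hg
  constructor
  · apply Function.LeftInverse.injective (g := g)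
    intro m
    simp only [LinearMap.comp_apply, LinearMap.flip_apply, TensorProduct.mk_apply]
    rw [hg, Submodule.mkQ_apply, Submodule.liftQ_apply, hΦtmul]
    simp
  · -- surjectivity
    have key : ∀ (p : Polynomial ℂ) (m : M),
        (LinearMap.range T).mkQ (m ⊗ₜ p)
          = (LinearMap.range T).mkQ ((Polynomial.aeval Dop p m) ⊗ₜ 1) := by
      intro p
      induction p using Polynomial.induction_on with
      | C a =>
          intro m
          have h1 : (m ⊗ₜ (Polynomial.C a) : M ⊗[ℂ] Polynomial ℂ)
              = (a • m) ⊗ₜ (1 : Polynomial ℂ) := by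
            rw [show (Polynomial.C a : Polynomial ℂ) = a • 1 by
              rw [← Polynomial.algebraMap_eq, Algebra.algebraMap_eq_smul_one]]
            exact (TensorProduct.smul_tmul a m 1).symm
          rw [h1, Polynomial.aeval_C, Module.algebraMap_end_apply]
      | add p q hp hq =>
          intro m
          rw [TensorProduct.tmul_add, map_add, hp, hq,
            ← map_add, ← TensorProduct.add_tmul]
          simp [map_add]
      | monomial n a ih =>
          intro m
          have hstep : (LinearMap.range T).mkQ
                (m ⊗ₜ (Polynomial.X * (Polynomial.C a * Polynomial.X ^ n)))
              = (LinearMap.range T).mkQ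
                (Dop m ⊗ₜ (Polynomial.C a * Polynomial.X ^ n)) := by
            rw [Submodule.mkQ_apply, Submodule.mkQ_apply, eq_comm,
              Submodule.Quotient.eq]
            refine ⟨m ⊗ₜ (Polynomial.C a * Polynomial.X ^ n), ?_⟩
            simp [hT, TensorProduct.map_tmul, sub_eq_sub_iff_add_eq_add]
          have hrw : Polynomial.C a * Polynomial.X ^ (n + 1)
              = Polynomial.X * (Polynomial.C a * Polynomial.X ^ n) := by ring
          rw [hrw, hstep, ih (Dop m), haevalX]
    intro y
    obtain ⟨t, rfl⟩ := Submodule.mkQ_surjective _ y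
    induction t using TensorProduct.induction_on with
    | zero => exact ⟨0, by simp⟩
    | tmul m p => exact ⟨Polynomial.aeval Dop p m, (key p m).symm⟩
    | add x y hx hy =>
        obtain ⟨m1, h1⟩ := hx
        obtain ⟨m2, h2⟩ := hy
        refine ⟨m1 + m2, ?_⟩
        simp only [LinearMap.comp_apply, LinearMap.flip_apply,
          TensorProduct.mk_apply] at h1 h2 ⊢
        rw [TensorProduct.add_tmul, map_add, h1, h2, ← map_add]
end

section
/- Let M be a left C[x]⟨∂_x⟩-module and 𝓜 = M ⊗_C C[ξ]. On the cokernel of ∂_x − ξ : 𝓜 → 𝓜, the operator ∂_ξ − x descends to a well-defined endomorphism, and under the bijection M ≅ coker(∂_x − ξ) (m ↦ [m⊗1]) this endomorphism corresponds to the action of −x on M, while the action of ξ on the cokernel corresponds to the action of ∂_x on M. -/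
open TensorProduct

/-- Let `M` be a left ℂ[x]⟨∂ₓ⟩-module (actions `Xop` of `x`, `Dop` of `∂ₓ`,
`[Dop, Xop] = 1`) and `𝓜 = M ⊗_ℂ ℂ[ξ]`.  On `coker(∂ₓ - ξ : 𝓜 → 𝓜)`, the
operator `∂_ξ - x` descends to a well-defined endomorphism; under the bijection
`M ≅ coker(∂ₓ - ξ)`, `m ↦ [m ⊗ 1]`, this endomorphism corresponds to the action
of `-x` on `M`, while the action of `ξ` on the cokernel corresponds to the
action of `∂ₓ` on `M`. -/
theorem stmt_5 {M : Type*} [AddCommGroup M] [Module ℂ M]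
    (Xop Dop : M →ₗ[ℂ] M) (hrel : Dop ∘ₗ Xop - Xop ∘ₗ Dop = LinearMap.id) :
    -- the operator ∂ₓ - ξ on 𝓜
    ∀ L Dxi Xi : M ⊗[ℂ] Polynomial ℂ →ₗ[ℂ] M ⊗[ℂ] Polynomial ℂ,
    L = TensorProduct.map Dop (LinearMap.id : Polynomial ℂ →ₗ[ℂ] Polynomial ℂ)
          - TensorProduct.map (LinearMap.id : M →ₗ[ℂ] M)
              (LinearMap.mulLeft ℂ (Polynomial.X : Polynomial ℂ)) →
    -- the operator ∂_ξ - x on 𝓜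
    Dxi = TensorProduct.map (LinearMap.id : M →ₗ[ℂ] M)
            (Polynomial.derivative : Polynomial ℂ →ₗ[ℂ] Polynomial ℂ)
          - TensorProduct.map Xop (LinearMap.id : Polynomial ℂ →ₗ[ℂ] Polynomial ℂ) →
    -- the action of ξ on 𝓜
    Xi = TensorProduct.map (LinearMap.id : M →ₗ[ℂ] M)
          (LinearMap.mulLeft ℂ (Polynomial.X : Polynomial ℂ)) →
    -- ∂_ξ - x descends to the cokernel of L
    (∀ v ∈ LinearMap.range L, Dxi v ∈ LinearMap.range L) ∧
    -- on the cokernel, ∂_ξ - x acts as -x does on M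
    (∀ m : M, (LinearMap.range L).mkQ (Dxi (m ⊗ₜ[ℂ] 1))
        = (LinearMap.range L).mkQ ((-(Xop m)) ⊗ₜ[ℂ] 1)) ∧
    -- on the cokernel, ξ acts as ∂ₓ does on M
    (∀ m : M, (LinearMap.range L).mkQ (Xi (m ⊗ₜ[ℂ] 1))
        = (LinearMap.range L).mkQ ((Dop m) ⊗ₜ[ℂ] 1)) := by
  intro L Dxi Xi hL hD hX
  subst hL hD hX
  have hcomm : ∀ v, (TensorProduct.map (LinearMap.id : M →ₗ[ℂ] M)
            (Polynomial.derivative : Polynomial ℂ →ₗ[ℂ] Polynomial ℂ)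
          - TensorProduct.map Xop (LinearMap.id : Polynomial ℂ →ₗ[ℂ] Polynomial ℂ))
        ((TensorProduct.map Dop (LinearMap.id : Polynomial ℂ →ₗ[ℂ] Polynomial ℂ)
          - TensorProduct.map (LinearMap.id : M →ₗ[ℂ] M)
              (LinearMap.mulLeft ℂ (Polynomial.X : Polynomial ℂ))) v)
      = (TensorProduct.map Dop (LinearMap.id : Polynomial ℂ →ₗ[ℂ] Polynomial ℂ)
          - TensorProduct.map (LinearMap.id : M →ₗ[ℂ] M)
              (LinearMap.mulLeft ℂ (Polynomial.X : Polynomial ℂ)))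
        ((TensorProduct.map (LinearMap.id : M →ₗ[ℂ] M)
            (Polynomial.derivative : Polynomial ℂ →ₗ[ℂ] Polynomial ℂ)
          - TensorProduct.map Xop (LinearMap.id : Polynomial ℂ →ₗ[ℂ] Polynomial ℂ)) v) := by
    have key : ∀ m : M, Dop (Xop m) - Xop (Dop m) = m := by
      intro m
      have := congrArg (fun f => f m) hrel
      simpa using this
    intro v
    induction v using TensorProduct.induction_on with
    | zero => simp
    | tmul m p =>
        simp only [LinearMap.sub_apply, TensorProduct.map_tmul, LinearMap.id_coe, id_eq,
          map_sub, LinearMap.mulLeft_apply, Polynomial.derivative_mul,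
          Polynomial.derivative_X, one_mul]
        have hk := key m
        have : Dop (Xop m) ⊗ₜ[ℂ] p = (Xop (Dop m)) ⊗ₜ[ℂ] p + m ⊗ₜ[ℂ] p := by
          rw [← TensorProduct.add_tmul]
          congr 1
          linear_combination (norm := module) hk
        rw [this]
        rw [TensorProduct.tmul_add]
        abel
    | add x y hx hy =>
        simp only [map_add, hx, hy]
  refine ⟨?_, ?_, ?_⟩
  · rintro v ⟨u, rfl⟩
    exact ⟨_, (hcomm u).symm⟩
  · intro m
    congr 1
    simp [TensorProduct.neg_tmul]
  · intro m
    rw [← sub_eq_zero, ← map_sub, Submodule.mkQ_apply, Submodule.Quotient.mk_eq_zero]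
    refine ⟨-(m ⊗ₜ[ℂ] 1), ?_⟩
    simp
    abel
end

section
/- Let (C•) be a two-term complex of C-modules E →^f F and suppose given an exhaustive increasing filtration E = F_0 ⊆ F_1 ⊆ F_2 ⊆ ⋯ of a module M with f mapping F_m into F_{m+1}, such that for all m ≥ 1 the induced map F_m/F_{m-1} → F_{m+1}/F_m is an isomorphism. Then the inclusion of complexes (F_0 → F_1) ↪ (M → M) (with differential f on both) is a quasi-isomorphism; in particular it induces isomorphisms on kernels and cokernels: ker(f : F_0 → F_1) ≅ ker(f : M → M) and coker(f : F_0 → F_1) ≅ coker(f : M → M). -/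
/-- Let `f : M → M` be linear, with an exhaustive increasing filtration
`E = F 0 ⊆ F 1 ⊆ ⋯` of `M` such that `f (F m) ⊆ F (m+1)` and such that for all
`m ≥ 1` the induced map `F m / F (m-1) → F (m+1) / F m` is an isomorphism
(expressed elementwise: injectivity `hqinj` and surjectivity `hqsurj`).
Then the inclusion of two-term complexes `(F 0 → F 1) ↪ (M → M)` is a
quasi-isomorphism: it induces isomorphisms on kernels and cokernels, expressed
elementwise by: `ker f ⊆ F 0`; every element of `F 1` in the image of `f` is
the image of an element of `F 0`; and every element of `M` is, modulo the image
of `f`, an element of `F 1`. -/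
theorem stmt_9 {R M : Type*} [CommRing R] [AddCommGroup M] [Module R M]
    (f : M →ₗ[R] M) (F : ℕ → Submodule R M)
    (hmono : Monotone F)
    (hexh : ∀ z : M, ∃ m, z ∈ F m)
    (hmap : ∀ m, ∀ x ∈ F m, f x ∈ F (m + 1))
    (hqinj : ∀ m, 1 ≤ m → ∀ x ∈ F m, f x ∈ F m → x ∈ F (m - 1))
    (hqsurj : ∀ m, 1 ≤ m → ∀ y ∈ F (m + 1), ∃ x ∈ F m, y - f x ∈ F m) :
    ((LinearMap.ker f : Set M) ⊆ (F 0 : Set M)) ∧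
    (∀ y ∈ F 1, y ∈ LinearMap.range f → ∃ x ∈ F 0, f x = y) ∧
    (∀ z : M, ∃ y ∈ F 1, ∃ x : M, z = y + f x) := by
  -- descent: if `f x ∈ F 1` and `x ∈ F m` then `x ∈ F 0`
  have descend : ∀ m, ∀ x ∈ F m, f x ∈ F 1 → x ∈ F 0 := by
    intro m
    induction m with
    | zero => intro x hx _; exact hx
    | succ n ih =>
      intro x hx hfx
      have hx' : x ∈ F n := by
        have := hqinj (n + 1) (by omega) x hx (hmono (by omega) hfx)
        simpa using this
      exact ih x hx' hfx
  refine ⟨?_, ?_, ?_⟩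
  · intro x hx
    obtain ⟨m, hm⟩ := hexh x
    have hfx : f x ∈ F 1 := by
      have : f x = 0 := hx
      rw [this]; exact (F 1).zero_mem
    exact descend m x hm hfx
  · intro y hy ⟨x, hfx⟩
    obtain ⟨m, hm⟩ := hexh x
    exact ⟨x, descend m x hm (by rwa [hfx]), hfx⟩
  · intro z
    obtain ⟨m, hm⟩ := hexh z
    clear hexh
    induction m generalizing z with
    | zero => exact ⟨z, hmono (by omega) hm, 0, by simp⟩
    | succ n ih =>
      rcases Nat.eq_zero_or_pos n with h0 | h1
      · subst h0; exact ⟨z, hm, 0, by simp⟩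
      · obtain ⟨x, hx, hzx⟩ := hqsurj n h1 z hm
        obtain ⟨y, hy, x', hx'⟩ := ih (z - f x) hzx
        exact ⟨y, hy, x' + x, by rw [map_add]; rw [sub_eq_iff_eq_add] at hx'; rw [hx']; abel⟩
end

section
/- With the hypotheses of the previous Laurent-series lemma, assume additionally that for any two diagonal entries μ_k, μ_m of C lying in the same eigenblock of A, μ_k − μ_m ∈ Z implies μ_k = μ_m. Then N = 0; i.e., any formal gauge transformation preserving the connection form A t^{−2} dt + C t^{−1} dt + O(1) dt is holomorphic at t = 0. Consequently two lattices F_1, F_2 of the same meromorphic connection germ in which the connection has this same normal form coincide. -/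
/-- Levelt's uniqueness argument.  With the hypotheses of the Laurent-series
lemma (a formal gauge transformation `g(t) = Σ_{b ≥ N} g_b t^b`, `g_N ≠ 0`,
preserving the connection form `A t⁻² dt + C t⁻¹ dt + O(1) dt` with
`A = diagonal a`, `C = diagonal c`), assume additionally that any two entries
`c i, c j` of `C` in the same eigenblock of `A` which are congruent mod ℤ are
equal.  Then `N = 0`: the gauge transformation is holomorphic at `t = 0`
(whence two lattices in which the connection has this same normal form
coincide). -/
theorem stmt_16 {r : ℕ} (a c : Fin r → ℂ) (N : ℤ)
    (g : ℤ → Matrix (Fin r) (Fin r) ℂ) (h₁ h₂ : ℕ → Matrix (Fin r) (Fin r) ℂ)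
    (hlow : ∀ b : ℤ, b < N → g b = 0) (hgN : g N ≠ 0)
    (heq : ∀ b : ℤ, (b : ℂ) • g b
        = Matrix.diagonal a * g (b + 1) - g (b + 1) * Matrix.diagonal a
          + Matrix.diagonal c * g b - g b * Matrix.diagonal c
          + ∑ k ∈ Finset.range (b - N).toNat,
              (h₁ k * g (b - 1 - k) - g (b - 1 - k) * h₂ k))
    (hC : ∀ i j, a i = a j → (∃ n : ℤ, c i - c j = (n : ℂ)) → c i = c j) :
    N = 0 := by
  -- find a nonzero entry of g N
  obtain ⟨i, j, hx⟩ : ∃ i j, g N i j ≠ 0 := by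
    by_contra h
    push_neg at h
    exact hgN (by ext i j; simpa using h i j)
  set x := g N i j with hxdef
  -- relation at b = N - 1 : g N commutes with diagonal a
  have e1 := heq (N - 1)
  have hgN1 : g (N - 1) = 0 := hlow _ (by omega)
  have hrange1 : (N - 1 - N).toNat = 0 := by omega
  rw [hgN1, hrange1, sub_add_cancel] at e1
  simp only [Finset.range_zero, Finset.sum_empty, smul_zero, Matrix.mul_zero,
    Matrix.zero_mul, add_zero, sub_zero] at e1
  have e1' := congrFun (congrFun e1 i) j
  simp only [Matrix.zero_apply, Matrix.sub_apply, Matrix.add_apply,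
    Matrix.diagonal_mul, Matrix.mul_diagonal] at e1'
  have haij : a i = a j := by
    have : (a i - a j) * x = 0 := by ring_nf; linear_combination -e1'
    rcases mul_eq_zero.mp this with h | h
    · exact sub_eq_zero.mp h
    · exact absurd h hx
  -- relation at b = N
  have e2 := heq N
  have hrange2 : (N - N).toNat = 0 := by omega
  rw [hrange2] at e2
  simp only [Finset.range_zero, Finset.sum_empty, add_zero] at e2
  have e2' := congrFun (congrFun e2 i) j
  simp only [Matrix.smul_apply, Matrix.sub_apply, Matrix.add_apply,
    Matrix.diagonal_mul, Matrix.mul_diagonal, smul_eq_mul] at e2'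
  have key : (N : ℂ) * x = (c i - c j) * x := by
    rw [e2', haij]; ring
  have hNc : (N : ℂ) = c i - c j := mul_right_cancel₀ hx key
  have hcij : c i = c j := hC i j haij ⟨N, hNc.symm⟩
  have : (N : ℂ) = 0 := by rw [hNc, hcij, sub_self]
  exact_mod_cast this
end

section
/- Let f : M → M be a C-linear endomorphism of a C[x]⟨∂_x⟩-module-like filtered object with exhaustive filtration F_0 ⊆ F_1 ⊆ ⋯, M = ⋃ F_m, f(F_m) ⊆ F_{m+1}, and assume all induced maps F_m/F_{m-1} → F_{m+1}/F_m (m ≥ 1) are bijections. Then coker(f : M → M) is isomorphic to coker(f : F_0 → F_1) and in particular, if F_0 and F_1 are finite-dimensional, then coker(f : M → M) is finite-dimensional with dimension dim F_1 − dim F_0 + dim ker(f : F_0 → F_1). -/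
/-- Let `f : M → M` be ℂ-linear with an exhaustive filtration
`F 0 ⊆ F 1 ⊆ ⋯`, `M = ⋃ F m`, `f (F m) ⊆ F (m+1)`, all induced maps
`F m / F (m-1) → F (m+1) / F m` (for `m ≥ 1`) bijections (expressed
elementwise), and `F 0`, `F 1` finite-dimensional.  Then
`coker(f : M → M) ≅ coker(f : F 0 → F 1)`; in particular `coker(f : M → M)` is
finite-dimensional with `dim coker = dim F 1 - dim F 0 + dim ker(f : F 0 → F 1)`
(stated additively to avoid truncated subtraction). -/
theorem stmt_19 {M : Type*} [AddCommGroup M] [Module ℂ M]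
    (f : M →ₗ[ℂ] M) (F : ℕ → Submodule ℂ M)
    (hmono : Monotone F)
    (hexh : ∀ z : M, ∃ m, z ∈ F m)
    (hmap : ∀ m, ∀ x ∈ F m, f x ∈ F (m + 1))
    (h01 : ∀ x ∈ F 0, f x ∈ F 1)
    (hqinj : ∀ m, 1 ≤ m → ∀ x ∈ F m, f x ∈ F m → x ∈ F (m - 1))
    (hqsurj : ∀ m, 1 ≤ m → ∀ y ∈ F (m + 1), ∃ x ∈ F m, y - f x ∈ F m)
    (hfd0 : FiniteDimensional ℂ (F 0)) (hfd1 : FiniteDimensional ℂ (F 1)) :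
    Nonempty ((F 1 ⧸ LinearMap.range (f.restrict h01)) ≃ₗ[ℂ]
        (M ⧸ LinearMap.range f)) ∧
    FiniteDimensional ℂ (M ⧸ LinearMap.range f) ∧
    Module.finrank ℂ (M ⧸ LinearMap.range f) + Module.finrank ℂ (F 0)
      = Module.finrank ℂ (F 1)
        + Module.finrank ℂ (LinearMap.ker (f.restrict h01)) := by
  -- the natural map F 1 → M ⧸ range f
  set φ : (F 1) →ₗ[ℂ] (M ⧸ LinearMap.range f) :=
    (LinearMap.range f).mkQ.comp (F 1).subtype with hφ
  -- surjectivity: every element of F m is congruent to an element of F 1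
  have key : ∀ m, ∀ y ∈ F m, ∃ x ∈ F 1, y - x ∈ LinearMap.range f := by
    intro m
    induction m with
    | zero =>
      intro y hy
      exact ⟨y, hmono (Nat.zero_le 1) hy, by simp⟩
    | succ m ih =>
      intro y hy
      rcases Nat.eq_zero_or_pos m with hm | hm
      · subst hm
        exact ⟨y, hy, by simp⟩
      · obtain ⟨x, hx, hyx⟩ := hqsurj m hm y hy
        obtain ⟨x', hx', hr⟩ := ih (y - f x) hyx
        refine ⟨x', hx', ?_⟩
        have : y - x' = (y - f x - x') + f x := by abel
        rw [this]
        exact add_mem hr ⟨x, rfl⟩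
  have hsurj : Function.Surjective φ := by
    intro q
    obtain ⟨z, rfl⟩ := (LinearMap.range f).mkQ_surjective q
    obtain ⟨m, hm⟩ := hexh z
    obtain ⟨x, hx, hr⟩ := key m z hm
    refine ⟨⟨x, hx⟩, ?_⟩
    simp only [hφ, LinearMap.comp_apply, Submodule.coe_subtype]
    rw [Submodule.mkQ_apply, Submodule.mkQ_apply, Submodule.Quotient.eq]
    simpa [neg_sub] using (LinearMap.range f).neg_mem hr
  -- injectivity part: preimages land in F 0
  have pre : ∀ m, ∀ z ∈ F m, f z ∈ F 1 → z ∈ F 0 := by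
    intro m
    induction m with
    | zero => intro z hz _; exact hz
    | succ m ih =>
      intro z hz hfz
      have h1 : f z ∈ F (m + 1) := hmono (Nat.one_le_iff_ne_zero.mpr (Nat.succ_ne_zero m)) hfz
      have := hqinj (m + 1) (Nat.succ_le_succ (Nat.zero_le m)) z hz h1
      simpa using ih z (by simpa using this) hfz
  have hker : LinearMap.ker φ = LinearMap.range (f.restrict h01) := by
    ext x
    constructor
    · intro hx
      have hx' : (x : M) ∈ LinearMap.range f := by
        simpa [hφ, Submodule.Quotient.mk_eq_zero] using hx
      obtain ⟨z, hz⟩ := hx'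
      obtain ⟨m, hm⟩ := hexh z
      have hz0 : z ∈ F 0 := pre m z hm (hz ▸ x.2)
      exact ⟨⟨z, hz0⟩, Subtype.ext hz⟩
    · rintro ⟨⟨z, hz0⟩, rfl⟩
      simp [hφ, LinearMap.restrict_apply, Submodule.Quotient.mk_eq_zero]
  -- assemble
  have e : (F 1 ⧸ LinearMap.range (f.restrict h01)) ≃ₗ[ℂ] (M ⧸ LinearMap.range f) := by
    rw [← hker]
    exact φ.quotKerEquivOfSurjective hsurj
  refine ⟨⟨e⟩, ?_, ?_⟩
  · have : FiniteDimensional ℂ (F 1 ⧸ LinearMap.range (f.restrict h01)) := inferInstance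
    exact Module.Finite.equiv e
  · have h1 : Module.finrank ℂ (M ⧸ LinearMap.range f)
        = Module.finrank ℂ (F 1 ⧸ LinearMap.range (f.restrict h01)) := e.symm.finrank_eq
    have h2 := Submodule.finrank_quotient_add_finrank (LinearMap.range (f.restrict h01))
    have h3 := (f.restrict h01).finrank_range_add_finrank_ker
    omega
end
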